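/- Let d ≥ 1 and let F : ℝ^d → ℝ^d be a continuous single-valued cyclically quasi-monotone map with F(x) ≠ 0 for every x ∈ ℝ^d. Then for every x, x' ∈ ℝ^d, the interiors of C^F(x) and C^F(x') have non-empty intersection. -/

import Mathlib

open scoped RealInnerProductSpace

/-- Cyclic quasi-monotonicity of a single-valued map `F : ℝ^d → ℝ^d`. -/
def CyclicallyQuasiMonotoneS {d : ℕ}
    (F : EuclideanSpace ℝ (Fin d) → EuclideanSpace ℝ (Fin d)) : Prop :=
  ∀ (N : ℕ) (x : ℕ → EuclideanSpace ℝ (Fin d)),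
    0 < N → x N = x 0 →
    ∃ i < N, ⟪F (x i), x (i + 1) - x i⟫ ≤ 0

/-- `a ≺_F b`: there is an `F`-ascending path from `a` to `b`. -/
def PrecS {d : ℕ} (F : EuclideanSpace ℝ (Fin d) → EuclideanSpace ℝ (Fin d))
    (a b : EuclideanSpace ℝ (Fin d)) : Prop :=
  ∃ (N : ℕ) (x : ℕ → EuclideanSpace ℝ (Fin d)),
    0 < N ∧ x 0 = a ∧ x N = b ∧ ∀ i < N, 0 < ⟪F (x i), x (i + 1) - x i⟫

/-- `a ⪯_F b`: `{w : w ≺_F a} ⊆ {w : w ≺_F b}`. -/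
def PreceqS {d : ℕ} (F : EuclideanSpace ℝ (Fin d) → EuclideanSpace ℝ (Fin d))
    (a b : EuclideanSpace ℝ (Fin d)) : Prop :=
  ∀ w, PrecS F w a → PrecS F w b

/-- The convex set `C^F(x) = {w : w ⪯_F x}`. -/
def CS {d : ℕ} (F : EuclideanSpace ℝ (Fin d) → EuclideanSpace ℝ (Fin d))
    (x : EuclideanSpace ℝ (Fin d)) : Set (EuclideanSpace ℝ (Fin d)) :=
  {w | PreceqS F w x}

/-- If there is a one-step ascending move from `w` to `y`, then `w ∈ C^F(y)`. -/
lemma mem_CS_of_step {d : ℕ} (F : EuclideanSpace ℝ (Fin d) → EuclideanSpace ℝ (Fin d))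
    (y w : EuclideanSpace ℝ (Fin d)) (hw : 0 < ⟪F w, y - w⟫) : w ∈ CS F y := by
  rintro v ⟨N, p, hN, hp0, hpN, hstep⟩
  refine ⟨N + 1, fun i => if i = N + 1 then y else p i, by omega, ?_, by simp, ?_⟩
  · show (if (0:ℕ) = N + 1 then y else p 0) = v
    rw [if_neg (by omega : (0:ℕ) ≠ N+1)]; exact hp0
  · intro i hi
    rcases Nat.lt_succ_iff_lt_or_eq.mp hi with h | h
    · have h1 : i ≠ N + 1 := by omega
      have h2 : i + 1 ≠ N + 1 := by omega
      simp only [h1, h2, if_false]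
      exact hstep i h
    · subst h
      have h1 : i ≠ i + 1 := by omega
      simp only [h1, if_false, if_pos rfl]
      rw [hpN]
      exact hw

theorem stmt16 (d : ℕ) (hd : 1 ≤ d)
    (F : EuclideanSpace ℝ (Fin d) → EuclideanSpace ℝ (Fin d))
    (hcont : Continuous F) (hF : CyclicallyQuasiMonotoneS F)
    (hnv : ∀ x, F x ≠ 0) (x x' : EuclideanSpace ℝ (Fin d)) :
    (interior (CS F x) ∩ interior (CS F x')).Nonempty := by
  classical
  set r : ℝ := dist x' x + 1 with hr
  have hr1 : 1 ≤ r := by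
    have := dist_nonneg (x := x') (y := x); simp [hr]
  set B : Set (EuclideanSpace ℝ (Fin d)) := Metric.closedBall x r with hB
  have hxB : x ∈ B := by
    simp only [hB, Metric.mem_closedBall, dist_self]; linarith
  have hx'B : x' ∈ B := by
    simp only [hB, Metric.mem_closedBall]; simp [hr]
  -- Step 1: a Minty point v₀ ∈ B : ∀ z ∈ B, ⟪F z, v₀ - z⟫ ≤ 0.
  obtain ⟨v₀, hv₀B, hv₀⟩ : ∃ v₀ ∈ B, ∀ z ∈ B, ⟪F z, v₀ - z⟫ ≤ 0 := by
    by_contra hcon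
    push_neg at hcon
    -- the family of closed half-spaces
    set t : EuclideanSpace ℝ (Fin d) → Set (EuclideanSpace ℝ (Fin d)) := fun z => {v | z ∈ B → ⟪F z, v - z⟫ ≤ 0} with ht
    have hclosed : ∀ z, IsClosed (t z) := by
      intro z
      by_cases hz : z ∈ B
      · have : t z = {v | ⟪F z, v - z⟫ ≤ 0} := by
          ext v; simp [ht, hz]
        rw [this]
        exact isClosed_le (Continuous.inner continuous_const
          (continuous_id.sub continuous_const)) continuous_const
      · have : t z = Set.univ := by
          ext v; simp [ht, hz]
        rw [this]; exact isClosed_univ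
    have hempty : B ∩ ⋂ z, t z = ∅ := by
      rw [Set.eq_empty_iff_forall_notMem]
      rintro v ⟨hvB, hvI⟩
      obtain ⟨z, hzB, hzpos⟩ := hcon v hvB
      have := (Set.mem_iInter.mp hvI z) hzB
      linarith
    obtain ⟨u, hu⟩ := (isCompact_closedBall x r).elim_finite_subfamily_closed t hclosed hempty
    have hcover : ∀ v ∈ B, ∃ z ∈ u, z ∈ B ∧ 0 < ⟪F z, v - z⟫ := by
      intro v hv
      by_contra h
      push_neg at h
      have hvmem : v ∈ B ∩ ⋂ z ∈ u, t z := by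
        refine ⟨hv, ?_⟩
        rw [Set.mem_iInter₂]
        intro z hzu
        exact h z hzu
      rw [Set.eq_empty_iff_forall_notMem] at hu
      exact hu v hvmem
    -- finite set of relevant points
    set T : Finset (EuclideanSpace ℝ (Fin d)) := u.filter (· ∈ B) with hT
    have hTcover : ∀ v ∈ B, ∃ z ∈ T, 0 < ⟪F z, v - z⟫ := by
      intro v hv
      obtain ⟨z, hzu, hzB, hzpos⟩ := hcover v hv
      exact ⟨z, Finset.mem_filter.mpr ⟨hzu, hzB⟩, hzpos⟩
    obtain ⟨w₀, hw₀T, _⟩ := hTcover x hxB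
    have hstep : ∀ a : {z // z ∈ T}, ∃ b : {z // z ∈ T}, 0 < ⟪F b.1, a.1 - b.1⟫ := by
      rintro ⟨a, haT⟩
      have haB : a ∈ B := (Finset.mem_filter.mp haT).2
      obtain ⟨z, hzT, hzpos⟩ := hTcover a haB
      exact ⟨⟨z, hzT⟩, hzpos⟩
    choose g hg using hstep
    set seq : ℕ → {z // z ∈ T} := fun n => g^[n] ⟨w₀, hw₀T⟩ with hseq
    obtain ⟨a, b, hab, heqab⟩ := Finite.exists_ne_map_eq_of_infinite seq
    obtain ⟨a, b, hlt, heq⟩ : ∃ a b, a < b ∧ seq a = seq b := by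
      rcases hab.lt_or_gt with h | h
      exacts [⟨a, b, h, heqab⟩, ⟨b, a, h, heqab.symm⟩]
    set N := b - a with hN
    set c : ℕ → EuclideanSpace ℝ (Fin d) := fun i => (seq (b - i) : EuclideanSpace ℝ (Fin d)) with hc
    have hcyc : c N = c 0 := by
      have h1 : b - N = a := by omega
      have h2 : b - 0 = b := by omega
      simp only [hc, h1, h2, heq]
    obtain ⟨i, hiN, hile⟩ := hF N c (by omega) hcyc
    have : 0 < ⟪F (c i), c (i + 1) - c i⟫ := by
      have hkey : b - i = (b - (i + 1)) + 1 := by omega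
      have : seq (b - i) = g (seq (b - (i + 1))) := by
        rw [hkey, hseq]
        exact Function.iterate_succ_apply' g _ _
      simp only [hc, this]
      exact hg (seq (b - (i + 1)))
    linarith
  -- Step 2: Stampacchia inequality at v₀
  have hSt : ∀ z ∈ B, 0 ≤ ⟪F v₀, z - v₀⟫ := by
    intro z hz
    have key : ∀ n : ℕ, 0 ≤ ⟪F (v₀ + (1 / ((n : ℝ) + 1)) • (z - v₀)), z - v₀⟫ := by
      intro n
      set s : ℝ := 1 / ((n : ℝ) + 1) with hs
      have hs0 : 0 < s := by positivity
      have hs1 : s ≤ 1 := by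
        rw [hs, div_le_one (by positivity)]
        simp
      set zt : EuclideanSpace ℝ (Fin d) := v₀ + s • (z - v₀) with hzt
      have hztB : zt ∈ B := by
        have hzt2 : zt = (1 - s) • v₀ + s • z := by
          rw [hzt, smul_sub, sub_smul, one_smul]; abel
        rw [hzt2]
        exact (convex_closedBall x r) hv₀B hz (by linarith) (le_of_lt hs0) (by ring)
      have hin := hv₀ zt hztB
      have hveq : v₀ - zt = (-s) • (z - v₀) := by
        rw [hzt]; module
      rw [hveq, real_inner_smul_right] at hin
      nlinarith
    have hlim : Filter.Tendsto
        (fun n : ℕ => ⟪F (v₀ + (1 / ((n : ℝ) + 1)) • (z - v₀)), z - v₀⟫)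
        Filter.atTop (nhds ⟪F v₀, z - v₀⟫) := by
      have h1 : Filter.Tendsto (fun n : ℕ => (1 / ((n : ℝ) + 1)))
          Filter.atTop (nhds 0) := tendsto_one_div_add_atTop_nhds_zero_nat
      have h2 : Filter.Tendsto (fun n : ℕ => v₀ + (1 / ((n : ℝ) + 1)) • (z - v₀))
          Filter.atTop (nhds v₀) := by
        have := (h1.smul tendsto_const_nhds (f := fun n : ℕ => (1 / ((n : ℝ) + 1)))
          (g := fun _ : ℕ => z - v₀))
        have h3 : Filter.Tendsto (fun n : ℕ => (1 / ((n : ℝ) + 1)) • (z - v₀))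
            Filter.atTop (nhds ((0 : ℝ) • (z - v₀))) := h1.smul_const (z - v₀)
        rw [zero_smul] at h3
        have := tendsto_const_nhds (x := v₀) (f := Filter.atTop (α := ℕ)) |>.add h3
        simpa using this
      have hFc : Continuous fun w : EuclideanSpace ℝ (Fin d) => ⟪F w, z - v₀⟫ :=
        Continuous.inner hcont continuous_const
      exact (hFc.tendsto v₀).comp h2
    exact ge_of_tendsto hlim (Filter.Eventually.of_forall key)
  -- Step 3: strict inequalities toward x and x'
  have hnorm : 0 < ‖F v₀‖ := norm_pos_iff.mpr (hnv v₀)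
  have hstrict : ∀ y : EuclideanSpace ℝ (Fin d), y ∈ B → Metric.closedBall y 1 ⊆ B → 0 < ⟪F v₀, y - v₀⟫ := by
    intro y hyB hball
    set z : EuclideanSpace ℝ (Fin d) := y - (‖F v₀‖⁻¹) • F v₀ with hz
    have hzB : z ∈ B := by
      apply hball
      rw [Metric.mem_closedBall, dist_eq_norm, hz]
      have : y - ‖F v₀‖⁻¹ • F v₀ - y = -(‖F v₀‖⁻¹ • F v₀) := by abel
      rw [this, norm_neg, norm_smul, norm_inv, norm_norm]
      rw [inv_mul_cancel₀ (ne_of_gt hnorm)]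
    have h0 := hSt z hzB
    have hexp : ⟪F v₀, z - v₀⟫ = ⟪F v₀, y - v₀⟫ - ‖F v₀‖ := by
      have : z - v₀ = (y - v₀) - ‖F v₀‖⁻¹ • F v₀ := by rw [hz]; abel
      rw [this, inner_sub_right, real_inner_smul_right, real_inner_self_eq_norm_mul_norm]
      field_simp
    rw [hexp] at h0
    linarith
  have hxball : Metric.closedBall x 1 ⊆ B := by
    intro w hw
    rw [Metric.mem_closedBall] at hw ⊢
    linarith
  have hx'ball : Metric.closedBall x' 1 ⊆ B := by
    intro w hw
    rw [Metric.mem_closedBall] at hw ⊢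
    calc dist w x ≤ dist w x' + dist x' x := dist_triangle _ _ _
      _ ≤ 1 + dist x' x := by linarith
      _ = r := by rw [hr]; ring
  have hxs := hstrict x hxB hxball
  have hx's := hstrict x' hx'B hx'ball
  -- Step 4: conclude
  set U : Set (EuclideanSpace ℝ (Fin d)) := {w | 0 < ⟪F w, x - w⟫ ∧ 0 < ⟪F w, x' - w⟫} with hU
  have hUopen : IsOpen U := by
    have h1 : IsOpen {w : EuclideanSpace ℝ (Fin d) | 0 < ⟪F w, x - w⟫} :=
      isOpen_lt (f := fun _ => (0:ℝ)) (g := fun w => ⟪F w, x - w⟫) continuous_const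
        (Continuous.inner hcont (continuous_const.sub continuous_id))
    have h2 : IsOpen {w : EuclideanSpace ℝ (Fin d) | 0 < ⟪F w, x' - w⟫} :=
      isOpen_lt (f := fun _ => (0:ℝ)) (g := fun w => ⟪F w, x' - w⟫) continuous_const
        (Continuous.inner hcont (continuous_const.sub continuous_id))
    rw [hU, Set.setOf_and]
    exact h1.inter h2
  have hUx : U ⊆ CS F x := fun w hw => mem_CS_of_step F x w hw.1
  have hUx' : U ⊆ CS F x' := fun w hw => mem_CS_of_step F x' w hw.2
  have hv₀U : v₀ ∈ U := ⟨hxs, hx's⟩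
  exact ⟨v₀, interior_maximal hUx hUopen hv₀U, interior_maximal hUx' hUopen hv₀U⟩
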